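/- Compactness with countable models for STT: if every finite subset of a branch A is satisfiable, then A has a countable model (a model in which every domain D(σ) is countable). -/

import Mathlib

/-- Simple types of STT: the type `o` of truth values is `base 0`, sorts are `base (α+1)`. -/
inductive Ty : Type
  | base : ℕ → Ty
  | arr : Ty → Ty → Ty
  deriving DecidableEq

abbrev Ty.o : Ty := Ty.base 0
abbrev Ty.sort (α : ℕ) : Ty := Ty.base (α + 1)

/-- Terms of STT: variables, negation, primitive equality at every type, application,
lambda abstraction. -/
inductive Tm : Ty → Type
  | var : ℕ → (σ : Ty) → Tm σ
  | neg : Tm (Ty.arr Ty.o Ty.o)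
  | eq : (σ : Ty) → Tm (Ty.arr σ (Ty.arr σ Ty.o))
  | app : ∀ {σ τ : Ty}, Tm (Ty.arr σ τ) → Tm σ → Tm τ
  | lam : ℕ → (σ : Ty) → ∀ {τ : Ty}, Tm τ → Tm (Ty.arr σ τ)

def Tm.Not (s : Tm Ty.o) : Tm Ty.o := Tm.app Tm.neg s
def Tm.Eqn {σ : Ty} (s t : Tm σ) : Tm Ty.o := Tm.app (Tm.app (Tm.eq σ) s) t
def Tm.Diseq {σ : Ty} (s t : Tm σ) : Tm Ty.o := Tm.Not (Tm.Eqn s t)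

/-- Argument lists (spines): `Args σ ρ` turns a head of type `σ` into a term of type `ρ`. -/
inductive Args : Ty → Ty → Type
  | nil : ∀ {ρ}, Args ρ ρ
  | cons : ∀ {σ τ ρ}, Tm σ → Args τ ρ → Args (Ty.arr σ τ) ρ

def applyArgs : ∀ {σ ρ : Ty}, Tm σ → Args σ ρ → Tm ρ
  | _, _, s, Args.nil => s
  | _, _, s, Args.cons t a => applyArgs (Tm.app s t) a

def nfArgs (f : (σ : Ty) → Tm σ → Tm σ) : ∀ {σ ρ : Ty}, Args σ ρ → Args σ ρ
  | _, _, Args.nil => Args.nil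
  | _, _, Args.cons t a => Args.cons (f _ t) (nfArgs f a)

/-- Pairs of equi-typed argument lists `s₁ … sₙ` and `t₁ … tₙ`. -/
inductive Args2 : Ty → Ty → Type
  | nil : ∀ {ρ}, Args2 ρ ρ
  | cons : ∀ {σ τ ρ}, Tm σ → Tm σ → Args2 τ ρ → Args2 (Ty.arr σ τ) ρ

def Args2.left : ∀ {σ ρ}, Args2 σ ρ → Args σ ρ
  | _, _, Args2.nil => Args.nil
  | _, _, Args2.cons s _ p => Args.cons s (Args2.left p)

def Args2.right : ∀ {σ ρ}, Args2 σ ρ → Args σ ρ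
  | _, _, Args2.nil => Args.nil
  | _, _, Args2.cons _ t p => Args.cons t (Args2.right p)

/-- The list of disequations `sᵢ ≠ tᵢ` of a pair of argument lists. -/
def Args2.diseqs : ∀ {σ ρ}, Args2 σ ρ → List (Tm Ty.o)
  | _, _, Args2.nil => []
  | _, _, Args2.cons s t p => Tm.Diseq s t :: Args2.diseqs p

/-- Atomic heads: names (variables and the logical constants). -/
inductive Atomic : ∀ {σ : Ty}, Tm σ → Prop
  | var : ∀ n σ, Atomic (Tm.var n σ)
  | neg : Atomic Tm.neg
  | eq : ∀ σ, Atomic (Tm.eq σ)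

/-- Update a substitution at the name `(x, σ0)`. -/
def updS (θ : ℕ → (σ : Ty) → Option (Tm σ)) (x : ℕ) (σ0 : Ty) (t : Tm σ0) :
    ℕ → (σ : Ty) → Option (Tm σ) := fun n σ =>
  if h : n = x ∧ σ = σ0 then some (h.2.symm ▸ t) else θ n σ

/-- A normalization operator with an accompanying substitution operation,
satisfying N1–N3 and S1–S4. -/
structure NormOp : Type where
  nf : ∀ {σ : Ty}, Tm σ → Tm σ
  sub : (ℕ → (σ : Ty) → Option (Tm σ)) → ∀ {σ : Ty}, Tm σ → Tm σ
  n1 : ∀ {σ : Ty} (s : Tm σ), nf (nf s) = nf s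
  n2 : ∀ {σ τ : Ty} (s : Tm (Ty.arr σ τ)) (t : Tm σ), nf (Tm.app (nf s) t) = nf (Tm.app s t)
  n3 : ∀ {σ : Ty} {β : ℕ} (h : Tm σ), Atomic h → ∀ a : Args σ (Ty.base β),
      nf (applyArgs h a) = applyArgs h (nfArgs (fun _ s => nf s) a)
  s1 : ∀ θ (n : ℕ) (σ : Ty), sub θ (Tm.var n σ) = (θ n σ).getD (Tm.var n σ)
  s1neg : ∀ θ, sub θ Tm.neg = Tm.neg
  s1eq : ∀ θ (σ : Ty), sub θ (Tm.eq σ) = Tm.eq σ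
  s2 : ∀ θ {σ τ : Ty} (s : Tm (Ty.arr σ τ)) (t : Tm σ),
      sub θ (Tm.app s t) = Tm.app (sub θ s) (sub θ t)
  s3 : ∀ θ (x : ℕ) (σ : Ty) {τ : Ty} (s : Tm τ) (t : Tm σ),
      nf (Tm.app (sub θ (Tm.lam x σ s)) t) = nf (sub (updS θ x σ t) s)
  s4 : ∀ {σ : Ty} (s : Tm σ), nf (sub (fun _ _ => none) s) = nf s

/-- The evidence conditions for a branch `E`. -/
structure Evident (Ω : NormOp) (E : Set (Tm Ty.o)) : Prop where
  dn : ∀ s : Tm Ty.o, Tm.Not (Tm.Not s) ∈ E → s ∈ E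
  bq : ∀ s t : Tm Ty.o, Tm.Eqn s t ∈ E → (s ∈ E ∧ t ∈ E) ∨ (Tm.Not s ∈ E ∧ Tm.Not t ∈ E)
  be : ∀ s t : Tm Ty.o, Tm.Diseq s t ∈ E → (s ∈ E ∧ Tm.Not t ∈ E) ∨ (Tm.Not s ∈ E ∧ t ∈ E)
  fq : ∀ {σ τ : Ty} (s t : Tm (Ty.arr σ τ)), Tm.Eqn s t ∈ E → ∀ u : Tm σ, Ω.nf u = u →
      Tm.Eqn (Ω.nf (Tm.app s u)) (Ω.nf (Tm.app t u)) ∈ E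
  fe : ∀ {σ τ : Ty} (s t : Tm (Ty.arr σ τ)), Tm.Diseq s t ∈ E →
      ∃ x : ℕ, Tm.Diseq (Ω.nf (Tm.app s (Tm.var x σ))) (Ω.nf (Tm.app t (Tm.var x σ))) ∈ E
  mat : ∀ {σ : Ty} (x : ℕ) (p : Args2 σ Ty.o),
      applyArgs (Tm.var x σ) p.left ∈ E → Tm.Not (applyArgs (Tm.var x σ) p.right) ∈ E →
      ∃ d ∈ p.diseqs, d ∈ E
  dec : ∀ {σ : Ty} {α : ℕ} (x : ℕ) (p : Args2 σ (Ty.sort α)),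
      Tm.Diseq (applyArgs (Tm.var x σ) p.left) (applyArgs (Tm.var x σ) p.right) ∈ E →
      ∃ d ∈ p.diseqs, d ∈ E
  con : ∀ {α : ℕ} (s t u v : Tm (Ty.sort α)), Tm.Eqn s t ∈ E → Tm.Diseq u v ∈ E →
      (Tm.Diseq s u ∈ E ∧ Tm.Diseq t u ∈ E) ∨ (Tm.Diseq s v ∈ E ∧ Tm.Diseq t v ∈ E)

/-- A term `u` is discriminating in `E` if it occurs on one side of a disequation in `E`. -/
def Discriminating (E : Set (Tm Ty.o)) {σ : Ty} (u : Tm σ) : Prop :=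
  ∃ t : Tm σ, Tm.Diseq u t ∈ E ∨ Tm.Diseq t u ∈ E

/-- An `α`-discriminant: a maximal set of `α`-discriminating terms no two of which are
related by a disequation in `E`. -/
def IsDiscriminant (E : Set (Tm Ty.o)) (α : ℕ) (a : Set (Tm (Ty.sort α))) : Prop :=
  (∀ u ∈ a, Discriminating E u) ∧
  (∀ s ∈ a, ∀ t ∈ a, Tm.Diseq s t ∉ E) ∧
  (∀ b : Set (Tm (Ty.sort α)), a ⊆ b → (∀ u ∈ b, Discriminating E u) →
    (∀ s ∈ b, ∀ t ∈ b, Tm.Diseq s t ∉ E) → b = a)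

/-- `s # t`: the disequation `s ≠ t` or `t ≠ s` belongs to `E`. -/
def hashE (E : Set (Tm Ty.o)) {σ : Ty} (s t : Tm σ) : Prop :=
  Tm.Diseq s t ∈ E ∨ Tm.Diseq t s ∈ E

/-- Compatibility of two terms relative to an evident branch, by induction on types. -/
def compat (Ω : NormOp) (E : Set (Tm Ty.o)) : (σ : Ty) → Tm σ → Tm σ → Prop
  | Ty.base 0 => fun s t =>
      ¬(Ω.nf s ∈ E ∧ Tm.Not (Ω.nf t) ∈ E) ∧ ¬(Tm.Not (Ω.nf s) ∈ E ∧ Ω.nf t ∈ E)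
  | Ty.base (α + 1) => fun s t => ¬ hashE E (Ω.nf s) (Ω.nf t)
  | Ty.arr σ τ => fun s t => ∀ u v : Tm σ, compat Ω E σ u v →
      compat Ω E τ (Tm.app s u) (Tm.app t v)

/-- `ExistsPairHashNf Ω E p` holds if `[sᵢ] # [tᵢ]` for some position `i` of `p`. -/
def ExistsPairHashNf (Ω : NormOp) (E : Set (Tm Ty.o)) : ∀ {σ ρ : Ty}, Args2 σ ρ → Prop
  | _, _, Args2.nil => False
  | _, _, Args2.cons s t p => hashE E (Ω.nf s) (Ω.nf t) ∨ ExistsPairHashNf Ω E p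

/-- The value system of an evident branch `E`: at `o` the values are booleans, at a sort the
values are `α`-discriminants, and at function types the logical-relation clause is used. -/
def sem (Ω : NormOp) (E : Set (Tm Ty.o)) : (σ : Ty) → (A : Type) × (Tm σ → A → Prop)
  | Ty.base 0 => ⟨Bool, fun s b => if b then Tm.Not (Ω.nf s) ∉ E else Ω.nf s ∉ E⟩
  | Ty.base (α + 1) => ⟨Set (Tm (Ty.sort α)), fun s a =>
      IsDiscriminant E α a ∧ (Discriminating E (Ω.nf s) → Ω.nf s ∈ a)⟩
  | Ty.arr σ τ =>
      ⟨{x : (sem Ω E σ).1 // ∃ t : Tm σ, (sem Ω E σ).2 t x} → (sem Ω E τ).1,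
       fun s f => ∀ (t : Tm σ) (x : (sem Ω E σ).1) (h : (sem Ω E σ).2 t x),
         (sem Ω E τ).2 (Tm.app s t) (f ⟨x, t, h⟩)⟩

/-- An applicative structure for STT: nonempty domains, `D(στ)` a set of functions
`D(σ) → D(τ)` (extensionality), `D(o) = {0,1}`, together with an assignment for the
variables and logical values for `¬` and `=_σ`. -/
structure Struc : Type 1 where
  D : Ty → Type
  ap : ∀ {σ τ : Ty}, D (Ty.arr σ τ) → D σ → D τ
  ext : ∀ {σ τ : Ty} (f g : D (Ty.arr σ τ)), (∀ a : D σ, ap f a = ap g a) → f = g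
  ne : ∀ σ : Ty, Nonempty (D σ)
  I : ℕ → ∀ σ : Ty, D σ
  bo : D Ty.o ≃ Bool
  negv : D (Ty.arr Ty.o Ty.o)
  eqv : ∀ σ : Ty, D (Ty.arr σ (Ty.arr σ Ty.o))
  hneg : ∀ b : D Ty.o, ap negv b = bo.symm (!(bo b))
  heq : ∀ {σ : Ty} (a b : D σ), ap (ap (eqv σ) a) b = bo.symm true ↔ a = b

/-- Update the assignment of a structure at the name `(m, σ0)`. -/
def updD (M : Struc) (I : ℕ → ∀ σ, M.D σ) (m : ℕ) (σ0 : Ty) (a : M.D σ0) :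
    ℕ → ∀ σ, M.D σ := fun n σ =>
  if h : n = m ∧ σ = σ0 then (h.2.symm ▸ a) else I n σ

/-- The evaluation relation of a logical structure. -/
inductive Eval (M : Struc) : (ℕ → ∀ σ, M.D σ) → ∀ σ : Ty, Tm σ → M.D σ → Prop
  | var : ∀ (I : ℕ → ∀ σ, M.D σ) (n : ℕ) (σ : Ty), Eval M I σ (Tm.var n σ) (I n σ)
  | neg : ∀ I : ℕ → ∀ σ, M.D σ, Eval M I (Ty.arr Ty.o Ty.o) Tm.neg M.negv
  | eq : ∀ (I : ℕ → ∀ σ, M.D σ) (σ : Ty), Eval M I (Ty.arr σ (Ty.arr σ Ty.o)) (Tm.eq σ) (M.eqv σ)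
  | app : ∀ {I : ℕ → ∀ σ, M.D σ} {σ τ : Ty} {s : Tm (Ty.arr σ τ)} {t : Tm σ}
      {f : M.D (Ty.arr σ τ)} {a : M.D σ},
      Eval M I (Ty.arr σ τ) s f → Eval M I σ t a → Eval M I τ (Tm.app s t) (M.ap f a)
  | lam : ∀ {I : ℕ → ∀ σ, M.D σ} (n : ℕ) (σ : Ty) {τ : Ty} (s : Tm τ) (f : M.D (Ty.arr σ τ)),
      (∀ a : M.D σ, Eval M (updD M I n σ a) τ s (M.ap f a)) →
      Eval M I (Ty.arr σ τ) (Tm.lam n σ s) f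

/-- A logical interpretation: a logical structure whose evaluation is total. -/
structure Interp : Type 1 extends Struc where
  total : ∀ (σ : Ty) (s : Tm σ), ∃ a : toStruc.D σ, Eval toStruc toStruc.I σ s a

/-- `M` is a model of the set of formulas `E`. -/
def Satisfies (M : Interp) (E : Set (Tm Ty.o)) : Prop :=
  ∀ s ∈ E, Eval M.toStruc M.I Ty.o s (M.bo.symm true)

/-- A surjective interpretation: every value is denoted by some term. -/
def Surj (M : Interp) : Prop :=
  ∀ (σ : Ty) (a : M.D σ), ∃ s : Tm σ, Eval M.toStruc M.I σ s a

/-- A complete branch: contains `s` or `¬s` for every normal formula `s`. -/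
def CompleteBranch (Ω : NormOp) (E : Set (Tm Ty.o)) : Prop :=
  ∀ s : Tm Ty.o, Ω.nf s = s → s ∈ E ∨ Tm.Not s ∈ E

/-- The abstract consistency conditions on a set of branches `Γ`. -/
structure ACC (Ω : NormOp) (Γ : Set (Set (Tm Ty.o))) : Prop where
  dn : ∀ A ∈ Γ, ∀ s : Tm Ty.o, Tm.Not (Tm.Not s) ∈ A → insert s A ∈ Γ
  bq : ∀ A ∈ Γ, ∀ s t : Tm Ty.o, Tm.Eqn s t ∈ A →
      insert s (insert t A) ∈ Γ ∨ insert (Tm.Not s) (insert (Tm.Not t) A) ∈ Γ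
  be : ∀ A ∈ Γ, ∀ s t : Tm Ty.o, Tm.Diseq s t ∈ A →
      insert s (insert (Tm.Not t) A) ∈ Γ ∨ insert (Tm.Not s) (insert t A) ∈ Γ
  fq : ∀ A ∈ Γ, ∀ {σ τ : Ty} (s t : Tm (Ty.arr σ τ)), Tm.Eqn s t ∈ A → ∀ u : Tm σ, Ω.nf u = u →
      insert (Tm.Eqn (Ω.nf (Tm.app s u)) (Ω.nf (Tm.app t u))) A ∈ Γ
  fe : ∀ A ∈ Γ, ∀ {σ τ : Ty} (s t : Tm (Ty.arr σ τ)), Tm.Diseq s t ∈ A →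
      ∃ x : ℕ, insert (Tm.Diseq (Ω.nf (Tm.app s (Tm.var x σ))) (Ω.nf (Tm.app t (Tm.var x σ)))) A ∈ Γ
  mat : ∀ A ∈ Γ, ∀ {σ : Ty} (x : ℕ) (p : Args2 σ Ty.o),
      applyArgs (Tm.var x σ) p.left ∈ A → Tm.Not (applyArgs (Tm.var x σ) p.right) ∈ A →
      ∃ d ∈ p.diseqs, insert d A ∈ Γ
  dec : ∀ A ∈ Γ, ∀ {σ : Ty} {α : ℕ} (x : ℕ) (p : Args2 σ (Ty.sort α)),
      Tm.Diseq (applyArgs (Tm.var x σ) p.left) (applyArgs (Tm.var x σ) p.right) ∈ A →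
      ∃ d ∈ p.diseqs, insert d A ∈ Γ
  con : ∀ A ∈ Γ, ∀ {α : ℕ} (s t u v : Tm (Ty.sort α)), Tm.Eqn s t ∈ A → Tm.Diseq u v ∈ A →
      insert (Tm.Diseq s u) (insert (Tm.Diseq t u) A) ∈ Γ ∨
      insert (Tm.Diseq s v) (insert (Tm.Diseq t v) A) ∈ Γ

/-- A complete abstract consistency class. -/
def CompleteACC (Ω : NormOp) (Γ : Set (Set (Tm Ty.o))) : Prop :=
  ∀ A ∈ Γ, ∀ s : Tm Ty.o, Ω.nf s = s → insert s A ∈ Γ ∨ insert (Tm.Not s) A ∈ Γ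

/-- Free occurrence of the name `(x, μ)` in a term. -/
def FreeIn (x : ℕ) (μ : Ty) : ∀ {σ : Ty}, Tm σ → Prop
  | _, Tm.var n σ => x = n ∧ μ = σ
  | _, Tm.app s t => FreeIn x μ s ∨ FreeIn x μ t
  | _, Tm.lam n σ s => ¬(x = n ∧ μ = σ) ∧ FreeIn x μ s
  | _, _ => False

/-- A closed branch: contains `x` and `¬x` for a variable `x : o`, or `x ≠ x` at a sort. -/
def ClosedB (A : Set (Tm Ty.o)) : Prop :=
  (∃ x : ℕ, Tm.var x Ty.o ∈ A ∧ Tm.Not (Tm.var x Ty.o) ∈ A) ∨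
  (∃ (α : ℕ) (x : ℕ), Tm.Diseq (Tm.var x (Ty.sort α)) (Tm.var x (Ty.sort α)) ∈ A)

/-- Refutability in the cut-free tableau calculus `T` for STT, with the restrictions that
rules are applied only to non-closed branches and functional extensionality is applied only
once per disequation. -/
inductive Refutable (Ω : NormOp) : Set (Tm Ty.o) → Prop
  | closed : ∀ {A : Set (Tm Ty.o)}, ClosedB A → Refutable Ω A
  | dn : ∀ {A : Set (Tm Ty.o)} {s : Tm Ty.o}, ¬ClosedB A → Tm.Not (Tm.Not s) ∈ A →
      Refutable Ω (insert s A) → Refutable Ω A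
  | bq : ∀ {A : Set (Tm Ty.o)} (s t : Tm Ty.o), ¬ClosedB A → Tm.Eqn s t ∈ A →
      Refutable Ω (insert s (insert t A)) →
      Refutable Ω (insert (Tm.Not s) (insert (Tm.Not t) A)) → Refutable Ω A
  | be : ∀ {A : Set (Tm Ty.o)} (s t : Tm Ty.o), ¬ClosedB A → Tm.Diseq s t ∈ A →
      Refutable Ω (insert s (insert (Tm.Not t) A)) →
      Refutable Ω (insert (Tm.Not s) (insert t A)) → Refutable Ω A
  | fq : ∀ {A : Set (Tm Ty.o)} {σ τ : Ty} (s t : Tm (Ty.arr σ τ)) (u : Tm σ), ¬ClosedB A →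
      Tm.Eqn s t ∈ A → Ω.nf u = u →
      Refutable Ω (insert (Tm.Eqn (Ω.nf (Tm.app s u)) (Ω.nf (Tm.app t u))) A) → Refutable Ω A
  | fe : ∀ {A : Set (Tm Ty.o)} {σ τ : Ty} (s t : Tm (Ty.arr σ τ)) (x : ℕ), ¬ClosedB A →
      Tm.Diseq s t ∈ A → (∀ u ∈ A, ¬ FreeIn x σ u) →
      (¬∃ y : ℕ, Tm.Diseq (Ω.nf (Tm.app s (Tm.var y σ))) (Ω.nf (Tm.app t (Tm.var y σ))) ∈ A) →
      Refutable Ω (insert (Tm.Diseq (Ω.nf (Tm.app s (Tm.var x σ))) (Ω.nf (Tm.app t (Tm.var x σ)))) A) →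
      Refutable Ω A
  | mat : ∀ {A : Set (Tm Ty.o)} {σ : Ty} (x : ℕ) (p : Args2 σ Ty.o), ¬ClosedB A →
      applyArgs (Tm.var x σ) p.left ∈ A → Tm.Not (applyArgs (Tm.var x σ) p.right) ∈ A →
      (∀ d ∈ p.diseqs, Refutable Ω (insert d A)) → Refutable Ω A
  | dec : ∀ {A : Set (Tm Ty.o)} {σ : Ty} {α : ℕ} (x : ℕ) (p : Args2 σ (Ty.sort α)), ¬ClosedB A →
      Tm.Diseq (applyArgs (Tm.var x σ) p.left) (applyArgs (Tm.var x σ) p.right) ∈ A →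
      (∀ d ∈ p.diseqs, Refutable Ω (insert d A)) → Refutable Ω A
  | con : ∀ {A : Set (Tm Ty.o)} {α : ℕ} (s t u v : Tm (Ty.sort α)), ¬ClosedB A →
      Tm.Eqn s t ∈ A → Tm.Diseq u v ∈ A →
      Refutable Ω (insert (Tm.Diseq s u) (insert (Tm.Diseq t u) A)) →
      Refutable Ω (insert (Tm.Diseq s v) (insert (Tm.Diseq t v) A)) → Refutable Ω A

namespace Stmt17

theorem updD_self (M : Struc) (I : ℕ → ∀ σ, M.D σ) (n : ℕ) (σ : Ty) (a : M.D σ) :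
    updD M I n σ a n σ = a := by
  show (if h : n = n ∧ σ = σ then (h.2.symm ▸ a) else I n σ) = a
  rw [dif_pos ⟨rfl, rfl⟩]

theorem updD_ne (M : Struc) (I : ℕ → ∀ σ, M.D σ) {n m : ℕ} {σ τ : Ty} (a : M.D σ)
    (h : ¬(m = n ∧ τ = σ)) : updD M I n σ a m τ = I m τ := by
  show (if h : m = n ∧ τ = σ then (h.2.symm ▸ a) else I m τ) = I m τ
  rw [dif_neg h]

theorem eval_unique {M : Struc} : ∀ {I : ℕ → ∀ σ, M.D σ} {σ : Ty} {s : Tm σ} {a : M.D σ},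
    Eval M I σ s a → ∀ {b : M.D σ}, Eval M I σ s b → a = b := by
  intro I σ s a h
  induction h with
  | var I n σ => intro b hb; cases hb; rfl
  | neg I => intro b hb; cases hb; rfl
  | eq I σ => intro b hb; cases hb; rfl
  | app h1 h2 ih1 ih2 =>
      intro b hb
      cases hb with
      | app g1 g2 => rw [ih1 g1, ih2 g2]
  | lam n σ s f hf ih =>
      intro b hb
      cases hb; rename_i hg
      exact M.ext f _ fun a => ih a (hg a)

theorem lam_inv {M : Struc} {I : ℕ → ∀ σ, M.D σ} {n : ℕ} {σ τ : Ty} {s : Tm τ}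
    {f : M.D (Ty.arr σ τ)} (h : Eval M I (Ty.arr σ τ) (Tm.lam n σ s) f) :
    ∀ a, Eval M (updD M I n σ a) τ s (M.ap f a) := by
  cases h; rename_i hf; exact hf

theorem eval_coincide {M : Struc} : ∀ {I : ℕ → ∀ σ, M.D σ} {σ : Ty} {s : Tm σ} {a : M.D σ},
    Eval M I σ s a → ∀ {J : ℕ → ∀ σ, M.D σ},
    (∀ x μ, FreeIn x μ s → I x μ = J x μ) → Eval M J σ s a := by
  intro I σ s a h
  induction h with
  | var I n σ =>
      intro J hJ
      have : I n σ = J n σ := hJ n σ ⟨rfl, rfl⟩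
      rw [this]; exact Eval.var J n σ
  | neg I => intro J _; exact Eval.neg J
  | eq I σ => intro J _; exact Eval.eq J σ
  | app h1 h2 ih1 ih2 =>
      intro J hJ
      exact Eval.app (ih1 fun x μ hx => hJ x μ (Or.inl hx)) (ih2 fun x μ hx => hJ x μ (Or.inr hx))
  | lam n σ s f hf ih =>
      intro J hJ
      refine Eval.lam n σ s f fun a => ih a fun x μ hx => ?_
      by_cases hc : x = n ∧ μ = σ
      · obtain ⟨rfl, rfl⟩ := hc; rw [updD_self, updD_self]
      · rw [updD_ne _ _ _ hc, updD_ne _ _ _ hc]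
        exact hJ x μ ⟨hc, hx⟩

end Stmt17
namespace Stmt17

def freeList : ∀ {σ : Ty}, Tm σ → List (ℕ × Ty)
  | _, Tm.var n σ => [(n, σ)]
  | _, Tm.neg => []
  | _, Tm.eq _ => []
  | _, Tm.app s t => freeList s ++ freeList t
  | _, Tm.lam n σ s => (freeList s).filter (fun p => p ≠ (n, σ))

theorem mem_freeList : ∀ {σ : Ty} (s : Tm σ) {x : ℕ} {μ : Ty},
    FreeIn x μ s → (x, μ) ∈ freeList s := by
  intro σ s
  induction s with
  | var n σ =>
      intro x μ h
      obtain ⟨rfl, rfl⟩ := h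
      simp [freeList]
  | neg => intro x μ h; exact h.elim
  | eq _ => intro x μ h; exact h.elim
  | app s t ihs iht =>
      intro x μ h
      rcases h with h | h
      · exact List.mem_append.2 (Or.inl (ihs h))
      · exact List.mem_append.2 (Or.inr (iht h))
  | lam n σ s ih =>
      intro x μ h
      obtain ⟨h1, h2⟩ := h
      refine List.mem_filter.2 ⟨ih h2, ?_⟩
      simp only [decide_eq_true_eq]
      intro hc
      exact h1 ⟨congrArg Prod.fst hc, congrArg Prod.snd hc⟩

abbrev Env (M : Struc) := List (ℕ × Σ τ : Ty, M.D τ)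

def applyEnv (M : Struc) : Env M → ℕ → ∀ σ : Ty, M.D σ
  | [] => M.I
  | (x, ⟨τ, a⟩) :: r => updD M (applyEnv M r) x τ a

def mkEnv (M : Struc) (J : ℕ → ∀ σ : Ty, M.D σ) (l : List (ℕ × Ty)) : Env M :=
  l.map fun p => (p.1, ⟨p.2, J p.1 p.2⟩)

theorem applyEnv_mkEnv (M : Struc) (J : ℕ → ∀ σ : Ty, M.D σ) :
    ∀ (l : List (ℕ × Ty)) {x : ℕ} {μ : Ty}, (x, μ) ∈ l →
      applyEnv M (mkEnv M J l) x μ = J x μ := by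
  intro l
  induction l with
  | nil => intro x μ h; exact absurd h List.not_mem_nil
  | cons p r ih =>
      intro x μ h
      obtain ⟨y, ν⟩ := p
      show updD M (applyEnv M (mkEnv M J r)) y ν (J y ν) x μ = J x μ
      by_cases hc : x = y ∧ μ = ν
      · obtain ⟨rfl, rfl⟩ := hc; exact updD_self ..
      · rw [updD_ne _ _ _ hc]
        apply ih
        rcases List.mem_cons.1 h with heq | hm
        · exact absurd ⟨congrArg Prod.fst heq, congrArg Prod.snd heq⟩ hc
        · exact hm

theorem total_step {N : Interp} {J : ℕ → ∀ σ : Ty, N.D σ}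
    (hJ : ∀ (σ : Ty) (s : Tm σ), ∃ a, Eval N.toStruc J σ s a)
    (x : ℕ) (τ : Ty) (v : N.D τ) :
    ∀ (σ : Ty) (s : Tm σ), ∃ a, Eval N.toStruc (updD N.toStruc J x τ v) σ s a := by
  intro σ s
  obtain ⟨f, hf⟩ := hJ _ (Tm.lam x τ s)
  exact ⟨N.ap f v, lam_inv hf v⟩

theorem total_env (N : Interp) : ∀ (L : Env N.toStruc) (σ : Ty) (s : Tm σ),
    ∃ a, Eval N.toStruc (applyEnv N.toStruc L) σ s a
  | [] => N.total
  | (x, ⟨τ, v⟩) :: r => total_step (total_env N r) x τ v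

theorem total_all (N : Interp) (J : ℕ → ∀ σ : Ty, N.D σ) (σ : Ty) (s : Tm σ) :
    ∃ a, Eval N.toStruc J σ s a := by
  obtain ⟨a, ha⟩ := total_env N (mkEnv N.toStruc J (freeList s)) σ s
  refine ⟨a, eval_coincide ha fun x μ hx => ?_⟩
  exact applyEnv_mkEnv N.toStruc J (freeList s) (mem_freeList s hx)

noncomputable def evalF (N : Interp) (J : ℕ → ∀ σ : Ty, N.D σ) {σ : Ty} (s : Tm σ) : N.D σ :=
  Classical.choose (total_all N J σ s)

theorem evalF_spec (N : Interp) (J : ℕ → ∀ σ : Ty, N.D σ) {σ : Ty} (s : Tm σ) :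
    Eval N.toStruc J σ s (evalF N J s) :=
  Classical.choose_spec (total_all N J σ s)

theorem evalF_eq {N : Interp} {J : ℕ → ∀ σ : Ty, N.D σ} {σ : Ty} {s : Tm σ} {a : N.D σ}
    (h : Eval N.toStruc J σ s a) : evalF N J s = a :=
  eval_unique (evalF_spec N J s) h

end Stmt17
namespace Stmt17

def eTy : Ty → ℕ
  | Ty.base n => Nat.pair 0 n
  | Ty.arr σ τ => Nat.pair 1 (Nat.pair (eTy σ) (eTy τ))

theorem eTy_inj : ∀ σ τ : Ty, eTy σ = eTy τ → σ = τ := by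
  intro σ
  induction σ with
  | base n =>
      intro τ h; cases τ with
      | base m => simp [eTy, Nat.pair_eq_pair] at h; rw [h]
      | arr _ _ => simp [eTy, Nat.pair_eq_pair] at h
  | arr σ1 σ2 ih1 ih2 =>
      intro τ h; cases τ with
      | base m => simp [eTy, Nat.pair_eq_pair] at h
      | arr τ1 τ2 =>
          simp [eTy, Nat.pair_eq_pair] at h
          rw [ih1 _ h.1, ih2 _ h.2]

def eTm : ∀ {σ : Ty}, Tm σ → ℕ
  | _, Tm.var n σ => Nat.pair 0 (Nat.pair n (eTy σ))
  | _, Tm.neg => Nat.pair 1 0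
  | _, Tm.eq σ => Nat.pair 2 (eTy σ)
  | _, @Tm.app σ _ s t => Nat.pair 3 (Nat.pair (eTy σ) (Nat.pair (eTm s) (eTm t)))
  | _, Tm.lam n σ s => Nat.pair 4 (Nat.pair n (Nat.pair (eTy σ) (eTm s)))

theorem eTm_inj2 : ∀ {σ : Ty} (s : Tm σ) {τ : Ty} (t : Tm τ), eTm s = eTm t → σ = τ ∧ HEq s t := by
  intro σ s
  induction s with
  | var n σ =>
      intro τ t h; cases t <;> simp [eTm, Nat.pair_eq_pair] at h
      obtain ⟨rfl, hty⟩ := h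
      obtain rfl := eTy_inj _ _ hty
      exact ⟨rfl, HEq.rfl⟩
  | neg =>
      intro τ t h; cases t <;> simp [eTm, Nat.pair_eq_pair] at h
      exact ⟨rfl, HEq.rfl⟩
  | eq σ =>
      intro τ t h; cases t <;> simp [eTm, Nat.pair_eq_pair] at h
      obtain rfl := eTy_inj _ _ h
      exact ⟨rfl, HEq.rfl⟩
  | app s1 s2 ih1 ih2 =>
      intro τ t h; cases t <;> simp [eTm, Nat.pair_eq_pair] at h
      obtain ⟨h0, h1, h2⟩ := h
      obtain rfl := eTy_inj _ _ h0
      obtain ⟨hty1, hh1⟩ := ih1 _ h1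
      obtain ⟨hty2, hh2⟩ := ih2 _ h2
      obtain rfl := (Ty.arr.inj hty1).2
      obtain rfl := eq_of_heq hh1
      obtain rfl := eq_of_heq hh2
      exact ⟨rfl, HEq.rfl⟩
  | lam n σ s ih =>
      intro τ t h; cases t <;> simp [eTm, Nat.pair_eq_pair] at h
      obtain ⟨rfl, h1, h2⟩ := h
      obtain rfl := eTy_inj _ _ h1
      obtain ⟨hty, hh⟩ := ih _ h2
      obtain rfl := hty
      obtain rfl := eq_of_heq hh
      exact ⟨rfl, HEq.rfl⟩

theorem eTm_inj : ∀ {σ : Ty} (s t : Tm σ), eTm s = eTm t → s = t :=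
  fun s t h => eq_of_heq (eTm_inj2 s t h).2

inductive Code : Type
  | base : ℕ → Ty → Code
  | wit : Code → Code → Code
  | ev : (σ : Ty) → Tm σ → Code → Code
  | nil : Code
  | cons : ℕ → (τ : Ty) → Code → Code → Code

def eCode : Code → ℕ
  | Code.base n σ => Nat.pair 0 (Nat.pair n (eTy σ))
  | Code.wit c d => Nat.pair 1 (Nat.pair (eCode c) (eCode d))
  | Code.ev σ s e => Nat.pair 2 (Nat.pair (eTy σ) (Nat.pair (eTm s) (eCode e)))
  | Code.nil => Nat.pair 3 0
  | Code.cons x τ c r => Nat.pair 4 (Nat.pair x (Nat.pair (eTy τ) (Nat.pair (eCode c) (eCode r))))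

theorem eCode_inj : ∀ c d : Code, eCode c = eCode d → c = d := by
  intro c
  induction c with
  | base n σ =>
      intro d h; cases d <;> simp [eCode, Nat.pair_eq_pair] at h
      obtain ⟨rfl, h2⟩ := h
      rw [eTy_inj _ _ h2]
  | wit c1 c2 ih1 ih2 =>
      intro d h; cases d <;> simp [eCode, Nat.pair_eq_pair] at h
      rw [ih1 _ h.1, ih2 _ h.2]
  | ev σ s e ih =>
      intro d h; cases d <;> simp [eCode, Nat.pair_eq_pair] at h
      obtain ⟨h0, h1, h2⟩ := h
      obtain rfl := eTy_inj _ _ h0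
      rw [eTm_inj _ _ h1, ih _ h2]
  | nil => intro d h; cases d <;> simp [eCode, Nat.pair_eq_pair] at h; rfl
  | cons x τ c r ih1 ih2 =>
      intro d h; cases d <;> simp [eCode, Nat.pair_eq_pair] at h
      obtain ⟨rfl, h1, h2, h3⟩ := h
      obtain rfl := eTy_inj _ _ h1
      rw [ih1 _ h2, ih2 _ h3]

instance : Countable Code :=
  countable_iff_exists_injective Code |>.2 ⟨eCode, fun a b => eCode_inj a b⟩

end Stmt17
namespace Stmt17

open Classical in
noncomputable def wit (N : Interp) {σ τ : Ty} (f g : N.D (Ty.arr σ τ)) : N.D σ :=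
  if h : ∃ a, N.ap f a ≠ N.ap g a then h.choose else Classical.choice (N.ne σ)

theorem wit_spec (N : Interp) {σ τ : Ty} {f g : N.D (Ty.arr σ τ)} (hfg : f ≠ g) :
    N.ap f (wit N f g) ≠ N.ap g (wit N f g) := by
  have h : ∃ a, N.ap f a ≠ N.ap g a := by
    by_contra hno
    push_neg at hno
    exact hfg (N.ext f g hno)
  rw [wit, dif_pos h]
  exact h.choose_spec

mutual
noncomputable def decodeV (N : Interp) : Code → Option (Σ σ : Ty, N.D σ)
  | Code.base n σ => some ⟨σ, N.I n σ⟩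
  | Code.wit c d =>
    match decodeV N c, decodeV N d with
    | some ⟨Ty.arr σ τ, f⟩, some ⟨μ, g⟩ =>
      if h : μ = Ty.arr σ τ then some ⟨σ, wit N f (h ▸ g)⟩ else none
    | _, _ => none
  | Code.ev σ s e => (decodeE N e).map fun L => ⟨σ, evalF N (applyEnv N.toStruc L) s⟩
  | Code.nil => none
  | Code.cons _ _ _ _ => none

noncomputable def decodeE (N : Interp) : Code → Option (Env N.toStruc)
  | Code.nil => some []
  | Code.cons x τ c r =>
    match decodeV N c, decodeE N r with
    | some ⟨μ, a⟩, some L => if h : μ = τ then some ((x, ⟨τ, h ▸ a⟩) :: L) else none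
    | _, _ => none
  | Code.base _ _ => none
  | Code.wit _ _ => none
  | Code.ev _ _ _ => none
end

def InD (N : Interp) (σ : Ty) (a : N.D σ) : Prop := ∃ c, decodeV N c = some ⟨σ, a⟩

theorem InD_I (N : Interp) (n : ℕ) (σ : Ty) : InD N σ (N.I n σ) := ⟨Code.base n σ, rfl⟩

theorem exists_code_env (N : Interp) :
    ∀ L : Env N.toStruc, (∀ p ∈ L, InD N p.2.1 p.2.2) → ∃ e, decodeE N e = some L := by
  intro L
  induction L with
  | nil => intro _; exact ⟨Code.nil, rfl⟩
  | cons p r ih =>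
      intro hp
      obtain ⟨x, τ, a⟩ := p
      obtain ⟨c, hc⟩ := hp (x, ⟨τ, a⟩) List.mem_cons_self
      obtain ⟨e, he⟩ := ih fun q hq => hp q (List.mem_cons_of_mem _ hq)
      refine ⟨Code.cons x τ c e, ?_⟩
      simp [decodeE, hc, he]

theorem InD_eval (N : Interp) (L : Env N.toStruc) (hL : ∀ p ∈ L, InD N p.2.1 p.2.2)
    {σ : Ty} (s : Tm σ) : InD N σ (evalF N (applyEnv N.toStruc L) s) := by
  obtain ⟨e, he⟩ := exists_code_env N L hL
  exact ⟨Code.ev σ s e, by simp [decodeV, he]⟩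

theorem InD_wit (N : Interp) {σ τ : Ty} {f g : N.D (Ty.arr σ τ)}
    (hf : InD N _ f) (hg : InD N _ g) : InD N σ (wit N f g) := by
  obtain ⟨c, hc⟩ := hf
  obtain ⟨d, hd⟩ := hg
  refine ⟨Code.wit c d, ?_⟩
  simp [decodeV, hc, hd]

end Stmt17
namespace Stmt17

theorem InD_ap (N : Interp) {σ τ : Ty} {f : N.D (Ty.arr σ τ)} {a : N.D σ}
    (hf : InD N _ f) (ha : InD N _ a) : InD N τ (N.ap f a) := by
  classical
  set L : Env N.toStruc := [(0, ⟨Ty.arr σ τ, f⟩), (1, ⟨σ, a⟩)] with hL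
  have hmem : ∀ p ∈ L, InD N p.2.1 p.2.2 := by
    intro p hp
    rcases List.mem_cons.1 hp with rfl | hp
    · exact hf
    · rcases List.mem_cons.1 hp with rfl | hp
      · exact ha
      · exact absurd hp List.not_mem_nil
  have h1 : applyEnv N.toStruc L 0 (Ty.arr σ τ) = f := by
    show updD N.toStruc _ 0 (Ty.arr σ τ) f 0 (Ty.arr σ τ) = f
    exact updD_self ..
  have h2 : applyEnv N.toStruc L 1 σ = a := by
    show updD N.toStruc (updD N.toStruc N.I 1 σ a) 0 (Ty.arr σ τ) f 1 σ = a
    rw [updD_ne]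
    · exact updD_self ..
    · intro hc; exact absurd hc.1 one_ne_zero
  have heval : Eval N.toStruc (applyEnv N.toStruc L) τ
      (Tm.app (Tm.var 0 (Ty.arr σ τ)) (Tm.var 1 σ)) (N.ap f a) := by
    have := Eval.app (Eval.var (applyEnv N.toStruc L) 0 (Ty.arr σ τ))
      (Eval.var (applyEnv N.toStruc L) 1 σ)
    rwa [h1, h2] at this
  have := InD_eval N L hmem (Tm.app (Tm.var 0 (Ty.arr σ τ)) (Tm.var 1 σ))
  rwa [evalF_eq heval] at this

theorem InD_of_eval_I (N : Interp) {σ : Ty} (s : Tm σ) {a : N.D σ}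
    (h : Eval N.toStruc N.I σ s a) : InD N σ a := by
  have := InD_eval N [] (by intro p hp; exact absurd hp List.not_mem_nil) s
  rwa [show applyEnv N.toStruc [] = N.I from rfl, evalF_eq h] at this

theorem InD_negv (N : Interp) : InD N _ N.negv :=
  InD_of_eval_I N Tm.neg (Eval.neg N.I)

theorem InD_eqv (N : Interp) (σ : Ty) : InD N _ (N.eqv σ) :=
  InD_of_eval_I N (Tm.eq σ) (Eval.eq N.I σ)

theorem eval_true (N : Interp) :
    Eval N.toStruc N.I Ty.o (Tm.Eqn (Tm.var 0 Ty.o) (Tm.var 0 Ty.o)) (N.bo.symm true) := by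
  have h := Eval.app (Eval.app (Eval.eq N.I Ty.o) (Eval.var N.I 0 Ty.o)) (Eval.var N.I 0 Ty.o)
  rwa [(N.heq (N.I 0 Ty.o) (N.I 0 Ty.o)).2 rfl] at h

theorem InD_true (N : Interp) : InD N Ty.o (N.bo.symm true) :=
  InD_of_eval_I N _ (eval_true N)

theorem eval_false (N : Interp) :
    Eval N.toStruc N.I Ty.o (Tm.Not (Tm.Eqn (Tm.var 0 Ty.o) (Tm.var 0 Ty.o))) (N.bo.symm false) := by
  have h := Eval.app (Eval.neg N.I) (eval_true N)
  rwa [N.hneg, Equiv.apply_symm_apply] at h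

theorem InD_false (N : Interp) : InD N Ty.o (N.bo.symm false) :=
  InD_of_eval_I N _ (eval_false N)

noncomputable def Sub (N : Interp) : Struc where
  D σ := {a : N.D σ // InD N σ a}
  ap f a := ⟨N.ap f.1 a.1, InD_ap N f.2 a.2⟩
  ext f g h := by
    apply Subtype.ext
    by_contra hne
    have hw := wit_spec N hne
    have := h ⟨wit N f.1 g.1, InD_wit N f.2 g.2⟩
    exact hw (congrArg Subtype.val this)
  ne σ := ⟨⟨N.I 0 σ, InD_I N 0 σ⟩⟩
  I n σ := ⟨N.I n σ, InD_I N n σ⟩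
  bo :=
    { toFun := fun a => N.bo a.1
      invFun := fun b => if b then ⟨N.bo.symm true, InD_true N⟩ else ⟨N.bo.symm false, InD_false N⟩
      left_inv := by
        intro a
        cases hb : N.bo a.1 with
        | false =>
            show (if N.bo a.1 = true then _ else _) = a
            rw [hb, if_neg Bool.false_ne_true]
            apply Subtype.ext
            show N.bo.symm false = a.1
            rw [← hb, Equiv.symm_apply_apply]
        | true =>
            show (if N.bo a.1 = true then _ else _) = a
            rw [hb, if_pos rfl]
            apply Subtype.ext
            show N.bo.symm true = a.1
            rw [← hb, Equiv.symm_apply_apply]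
      right_inv := by
        intro b
        cases b <;> simp [Equiv.apply_symm_apply] }
  negv := ⟨N.negv, InD_negv N⟩
  eqv σ := ⟨N.eqv σ, InD_eqv N σ⟩
  hneg := by
    intro b
    apply Subtype.ext
    show N.ap N.negv b.1 = _
    rw [N.hneg b.1]
    by_cases hb : N.bo b.1 = true <;> simp [hb]
  heq := by
    intro σ a b
    constructor
    · intro h
      have := congrArg Subtype.val h
      simp only at this
      exact Subtype.ext ((N.heq a.1 b.1).1 this)
    · intro h
      subst h
      apply Subtype.ext
      simp [(N.heq a.1 a.1).2 rfl]

end Stmt17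
namespace Stmt17

theorem val_updD (N : Interp) (J : ℕ → ∀ μ : Ty, (Sub N).D μ) (n : ℕ) (σ : Ty)
    (a : (Sub N).D σ) :
    (fun m (τ : Ty) => (updD (Sub N) J n σ a m τ).1) =
      updD N.toStruc (fun m (τ : Ty) => (J m τ).1) n σ a.1 := by
  funext m τ
  by_cases hc : m = n ∧ τ = σ
  · obtain ⟨rfl, rfl⟩ := hc
    rw [updD_self, updD_self]
  · rw [updD_ne _ _ _ hc, updD_ne _ _ _ hc]

theorem sub_eval (N : Interp) : ∀ {σ : Ty} (s : Tm σ) (J : ℕ → ∀ μ : Ty, (Sub N).D μ),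
    ∃ a : (Sub N).D σ, Eval (Sub N) J σ s a ∧
      Eval N.toStruc (fun m (τ : Ty) => (J m τ).1) σ s a.1 := by
  intro σ s
  induction s with
  | var n σ => intro J; exact ⟨J n σ, Eval.var J n σ, Eval.var _ n σ⟩
  | neg => intro J; exact ⟨(Sub N).negv, Eval.neg J, Eval.neg _⟩
  | eq σ => intro J; exact ⟨(Sub N).eqv σ, Eval.eq J σ, Eval.eq _ σ⟩
  | app s t ihs iht =>
      intro J
      obtain ⟨f, hf1, hf2⟩ := ihs J
      obtain ⟨a, ha1, ha2⟩ := iht J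
      exact ⟨(Sub N).ap f a, Eval.app hf1 ha1, Eval.app hf2 ha2⟩
  | lam n σ s ih =>
      intro J
      set K : ℕ → ∀ μ : Ty, N.D μ := fun m τ => (J m τ).1 with hK
      have hf : Eval N.toStruc K _ (Tm.lam n σ s) (evalF N K (Tm.lam n σ s)) :=
        evalF_spec N K (Tm.lam n σ s)
      -- f is in the substructure
      have hInD : InD N _ (evalF N K (Tm.lam n σ s)) := by
        set l := freeList (Tm.lam n σ s) with hl
        have hmem : ∀ p ∈ mkEnv N.toStruc K l, InD N p.2.1 p.2.2 := by
          intro p hp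
          obtain ⟨q, hq, rfl⟩ := List.mem_map.1 hp
          exact (J q.1 q.2).2
        have := InD_eval N (mkEnv N.toStruc K l) hmem (Tm.lam n σ s)
        have heq2 : evalF N (applyEnv N.toStruc (mkEnv N.toStruc K l)) (Tm.lam n σ s)
            = evalF N K (Tm.lam n σ s) := by
          apply evalF_eq
          refine eval_coincide hf fun x μ hx => ?_
          exact (applyEnv_mkEnv N.toStruc K l (mem_freeList _ hx)).symm
        rwa [heq2] at this
      refine ⟨⟨evalF N K (Tm.lam n σ s), hInD⟩, ?_, hf⟩
      refine Eval.lam n σ s _ fun a => ?_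
      obtain ⟨b, hb1, hb2⟩ := ih (updD (Sub N) J n σ a)
      rw [val_updD] at hb2
      have hap := lam_inv hf a.1
      have : b.1 = N.ap (evalF N K (Tm.lam n σ s)) a.1 := eval_unique hb2 hap
      have hb : b = (Sub N).ap ⟨evalF N K (Tm.lam n σ s), hInD⟩ a := Subtype.ext this
      rwa [hb] at hb1

noncomputable def SubI (N : Interp) : Interp where
  toStruc := Sub N
  total := fun σ s => ⟨(sub_eval N s (Sub N).I).choose, (sub_eval N s (Sub N).I).choose_spec.1⟩

theorem sub_sat {N : Interp} {A : Set (Tm Ty.o)} (hA : Satisfies N A) :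
    Satisfies (SubI N) A := by
  intro s hs
  obtain ⟨a, h1, h2⟩ := sub_eval N s (Sub N).I
  have hIv : (fun m (τ : Ty) => (((Sub N).I) m τ).1) = N.I := rfl
  rw [hIv] at h2
  have hval : a.1 = N.bo.symm true := eval_unique h2 (hA s hs)
  have : ((SubI N).bo.symm true) = a := by
    apply Subtype.ext
    show N.bo.symm true = a.1
    exact hval.symm
  rw [this]
  exact h1

theorem sub_total_eq (N : Interp) {σ : Ty} (s : Tm σ) {a : (Sub N).D σ}
    (h : Eval (Sub N) (Sub N).I σ s a) : True := trivial

instance sub_countable (N : Interp) (σ : Ty) : Countable ((Sub N).D σ) := by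
  classical
  have hsurj : ∃ F : Code → (Sub N).D σ, Function.Surjective F := by
    refine ⟨fun c =>
      if h : ∃ a : (Sub N).D σ, decodeV N c = some ⟨σ, a.1⟩ then h.choose
      else ⟨N.I 0 σ, InD_I N 0 σ⟩, ?_⟩
    intro a
    obtain ⟨c, hc⟩ := a.2
    have hex : ∃ b : (Sub N).D σ, decodeV N c = some ⟨σ, b.1⟩ := ⟨a, hc⟩
    refine ⟨c, ?_⟩
    show (if h : ∃ b : (Sub N).D σ, decodeV N c = some ⟨σ, b.1⟩ then h.choose
      else ⟨N.I 0 σ, InD_I N 0 σ⟩) = a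
    refine (dif_pos hex).trans ?_
    apply Subtype.ext
    have h2 : (⟨σ, hex.choose.1⟩ : Σ μ : Ty, N.D μ) = ⟨σ, a.1⟩ :=
      Option.some.inj (hex.choose_spec.symm.trans hc)
    exact eq_of_heq (Sigma.mk.inj_iff.1 h2).2
  obtain ⟨F, hF⟩ := hsurj
  exact hF.countable

end Stmt17
namespace Stmt17

section Ultra

variable {ι : Type} (U : Ultrafilter ι) (Mf : ι → Interp)

def usetoid (σ : Ty) : Setoid (∀ i, (Mf i).D σ) where
  r x y := {i | x i = y i} ∈ U
  iseqv := by
    refine ⟨fun x => Filter.univ_mem' fun i => rfl, fun h => ?_, fun h1 h2 => ?_⟩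
    · exact Filter.mem_of_superset h fun i hi => hi.symm
    · exact Filter.mem_of_superset (Filter.inter_mem h1 h2) fun i hi => hi.1.trans hi.2

def UD (σ : Ty) : Type := Quotient (usetoid U Mf σ)

def qk (σ : Ty) (x : ∀ i, (Mf i).D σ) : UD U Mf σ := Quotient.mk (usetoid U Mf σ) x

theorem qk_eq {σ : Ty} {x y : ∀ i, (Mf i).D σ} (h : {i | x i = y i} ∈ U) :
    qk U Mf σ x = qk U Mf σ y := Quotient.sound h

theorem qk_exact {σ : Ty} {x y : ∀ i, (Mf i).D σ} (h : qk U Mf σ x = qk U Mf σ y) :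
    {i | x i = y i} ∈ U := Quotient.exact h

def uap {σ τ : Ty} (f : UD U Mf (Ty.arr σ τ)) (a : UD U Mf σ) : UD U Mf τ :=
  Quotient.map₂ (fun f a i => (Mf i).ap (f i) (a i))
    (fun f f' hf a a' ha => by
      refine Filter.mem_of_superset (Filter.inter_mem hf ha) fun i hi => ?_
      show (Mf i).ap (f i) (a i) = (Mf i).ap (f' i) (a' i)
      rw [hi.1, hi.2]) f a

theorem uap_qk {σ τ : Ty} (f : ∀ i, (Mf i).D (Ty.arr σ τ)) (a : ∀ i, (Mf i).D σ) :
    uap U Mf (qk U Mf _ f) (qk U Mf _ a) = qk U Mf τ (fun i => (Mf i).ap (f i) (a i)) := rfl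

theorem uext {σ τ : Ty} (f g : UD U Mf (Ty.arr σ τ))
    (h : ∀ a : UD U Mf σ, uap U Mf f a = uap U Mf g a) : f = g := by
  induction f using Quotient.inductionOn with | _ x =>
  induction g using Quotient.inductionOn with | _ y =>
  by_contra hne
  have hc : {i | x i = y i}ᶜ ∈ U := Ultrafilter.compl_mem_iff_notMem.2 fun hm => hne (qk_eq U Mf hm)
  set a : ∀ i, (Mf i).D σ := fun i => wit (Mf i) (x i) (y i) with ha
  have happ := qk_exact U Mf (h (qk U Mf σ a))
  obtain ⟨i, hi1, hi2⟩ := Ultrafilter.nonempty_of_mem (Filter.inter_mem hc happ)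
  exact wit_spec (Mf i) hi1 hi2

end Ultra

end Stmt17
namespace Stmt17

section Ultra

variable {ι : Type} (U : Ultrafilter ι) (Mf : ι → Interp)

open Classical in
noncomputable def uboFun : UD U Mf Ty.o → Bool :=
  Quotient.lift (fun x => if {i | (Mf i).bo (x i) = true} ∈ U then true else false)
    (by
      intro x y hxy
      have hiff : {i | (Mf i).bo (x i) = true} ∈ U ↔ {i | (Mf i).bo (y i) = true} ∈ U := by
        constructor
        · intro hx
          refine Filter.mem_of_superset (Filter.inter_mem hx hxy) fun i hi => ?_
          show (Mf i).bo (y i) = true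
          rw [← hi.2]; exact hi.1
        · intro hy
          refine Filter.mem_of_superset (Filter.inter_mem hy hxy) fun i hi => ?_
          show (Mf i).bo (x i) = true
          rw [hi.2]; exact hi.1
      simp only [hiff])

open Classical in
theorem uboFun_qk_true {x : ∀ i, (Mf i).D Ty.o} (h : {i | (Mf i).bo (x i) = true} ∈ U) :
    uboFun U Mf (qk U Mf Ty.o x) = true := by
  show (if {i | (Mf i).bo (x i) = true} ∈ U then true else false) = true
  rw [if_pos h]

open Classical in
theorem uboFun_qk_false {x : ∀ i, (Mf i).D Ty.o} (h : ¬{i | (Mf i).bo (x i) = true} ∈ U) :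
    uboFun U Mf (qk U Mf Ty.o x) = false := by
  show (if {i | (Mf i).bo (x i) = true} ∈ U then true else false) = false
  rw [if_neg h]

noncomputable def ubo : UD U Mf Ty.o ≃ Bool where
  toFun := uboFun U Mf
  invFun b := qk U Mf Ty.o (fun i => (Mf i).bo.symm b)
  left_inv := by
    refine fun a => Quotient.inductionOn a fun x => ?_
    by_cases h : {i | (Mf i).bo (x i) = true} ∈ U
    · rw [show (Quotient.mk (usetoid U Mf Ty.o) x) = qk U Mf Ty.o x from rfl, uboFun_qk_true U Mf h]
      refine (qk_eq U Mf (Filter.mem_of_superset h fun i hi => ?_)).symm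
      show x i = (Mf i).bo.symm true
      rw [← hi]; exact ((Mf i).bo.symm_apply_apply (x i)).symm
    · rw [show (Quotient.mk (usetoid U Mf Ty.o) x) = qk U Mf Ty.o x from rfl, uboFun_qk_false U Mf h]
      have hc : {i | (Mf i).bo (x i) = true}ᶜ ∈ U := Ultrafilter.compl_mem_iff_notMem.2 h
      refine (qk_eq U Mf (Filter.mem_of_superset hc fun i hi => ?_)).symm
      show x i = (Mf i).bo.symm false
      have : (Mf i).bo (x i) = false := by
        have := hi
        simp only [Set.mem_compl_iff, Set.mem_setOf_eq, Bool.not_eq_true] at this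
        exact this
      rw [← this]; exact ((Mf i).bo.symm_apply_apply (x i)).symm
  right_inv := by
    intro b
    cases b
    · apply uboFun_qk_false
      intro hmem
      obtain ⟨i, hi⟩ := Ultrafilter.nonempty_of_mem hmem
      simp only [Set.mem_setOf_eq, Equiv.apply_symm_apply] at hi
      exact Bool.false_ne_true hi
    · exact uboFun_qk_true U Mf (Filter.univ_mem' fun i => by
        simp [Equiv.apply_symm_apply])

noncomputable def Ustruc : Struc where
  D := UD U Mf
  ap := uap U Mf
  ext := uext U Mf
  ne σ := ⟨qk U Mf σ fun i => Classical.choice ((Mf i).ne σ)⟩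
  I n σ := qk U Mf σ fun i => (Mf i).I n σ
  bo := ubo U Mf
  negv := qk U Mf _ fun i => (Mf i).negv
  eqv σ := qk U Mf _ fun i => (Mf i).eqv σ
  hneg := by
    refine fun b => Quotient.inductionOn b fun x => ?_
    show uap U Mf (qk U Mf _ fun i => (Mf i).negv) (qk U Mf _ x)
      = (ubo U Mf).symm (!(ubo U Mf) (qk U Mf _ x))
    rw [uap_qk]
    by_cases h : {i | (Mf i).bo (x i) = true} ∈ U
    · rw [show (ubo U Mf) (qk U Mf _ x) = uboFun U Mf (qk U Mf _ x) from rfl,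
        uboFun_qk_true U Mf h]
      show _ = qk U Mf Ty.o (fun i => (Mf i).bo.symm !true)
      refine qk_eq U Mf (Filter.mem_of_superset h fun i hi => ?_)
      show (Mf i).ap (Mf i).negv (x i) = (Mf i).bo.symm !true
      rw [(Mf i).hneg (x i), hi]
    · rw [show (ubo U Mf) (qk U Mf _ x) = uboFun U Mf (qk U Mf _ x) from rfl,
        uboFun_qk_false U Mf h]
      have hc : {i | (Mf i).bo (x i) = true}ᶜ ∈ U := Ultrafilter.compl_mem_iff_notMem.2 h
      show _ = qk U Mf Ty.o (fun i => (Mf i).bo.symm !false)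
      refine qk_eq U Mf (Filter.mem_of_superset hc fun i hi => ?_)
      show (Mf i).ap (Mf i).negv (x i) = (Mf i).bo.symm !false
      have hxi : (Mf i).bo (x i) = false := by
        have := hi
        simp only [Set.mem_compl_iff, Set.mem_setOf_eq, Bool.not_eq_true] at this
        exact this
      rw [(Mf i).hneg (x i), hxi]
  heq := by
    intro σ a b
    refine Quotient.inductionOn₂ a b fun x y => ?_
    show uap U Mf (uap U Mf (qk U Mf _ fun i => (Mf i).eqv σ) (qk U Mf _ x)) (qk U Mf _ y)
      = (ubo U Mf).symm true ↔ qk U Mf σ x = qk U Mf σ y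
    rw [uap_qk, uap_qk]
    show qk U Mf Ty.o (fun i => (Mf i).ap ((Mf i).ap ((Mf i).eqv σ) (x i)) (y i))
      = qk U Mf Ty.o (fun i => (Mf i).bo.symm true) ↔ _
    constructor
    · intro h
      refine qk_eq U Mf (Filter.mem_of_superset (qk_exact U Mf h) fun i hi => ?_)
      show x i = y i
      exact ((Mf i).heq (x i) (y i)).1 hi
    · intro h
      refine qk_eq U Mf (Filter.mem_of_superset (qk_exact U Mf h) fun i hi => ?_)
      show (Mf i).ap ((Mf i).ap ((Mf i).eqv σ) (x i)) (y i) = (Mf i).bo.symm true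
      exact ((Mf i).heq (x i) (y i)).2 hi

end Ultra

end Stmt17
namespace Stmt17

section Ultra

variable {ι : Type} (U : Ultrafilter ι) (Mf : ι → Interp)

theorem updD_qk (J : ∀ i, ℕ → ∀ μ : Ty, (Mf i).D μ) (n : ℕ) (σ : Ty)
    (x : ∀ i, (Mf i).D σ) :
    updD (Ustruc U Mf) (fun m (τ : Ty) => qk U Mf τ fun i => J i m τ) n σ (qk U Mf σ x)
      = fun m (τ : Ty) => qk U Mf τ fun i => updD (Mf i).toStruc (J i) n σ (x i) m τ := by
  funext m τ
  by_cases hc : m = n ∧ τ = σ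
  · obtain ⟨rfl, rfl⟩ := hc
    refine (updD_self _ _ _ _ _).trans ?_
    refine qk_eq U Mf (Filter.univ_mem' fun i => ?_)
    exact (updD_self ..).symm
  · refine (updD_ne _ _ _ hc).trans ?_
    refine qk_eq U Mf (Filter.univ_mem' fun i => ?_)
    exact (updD_ne _ _ _ hc).symm

theorem los : ∀ {σ : Ty} (s : Tm σ) (J : ∀ i, ℕ → ∀ μ : Ty, (Mf i).D μ),
    Eval (Ustruc U Mf) (fun m (τ : Ty) => qk U Mf τ fun i => J i m τ) σ s
      (qk U Mf σ fun i => evalF (Mf i) (J i) s) := by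
  intro σ s
  induction s with
  | var n σ =>
      intro J
      have hv : qk U Mf σ (fun i => evalF (Mf i) (J i) (Tm.var n σ))
          = qk U Mf σ (fun i => J i n σ) :=
        qk_eq U Mf (Filter.univ_mem' fun i => evalF_eq (Eval.var (J i) n σ))
      rw [hv]
      exact Eval.var _ n σ
  | neg =>
      intro J
      have hv : qk U Mf _ (fun i => evalF (Mf i) (J i) Tm.neg)
          = (Ustruc U Mf).negv :=
        qk_eq U Mf (Filter.univ_mem' fun i => evalF_eq (Eval.neg (J i)))
      rw [hv]
      exact Eval.neg _
  | eq σ =>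
      intro J
      have hv : qk U Mf _ (fun i => evalF (Mf i) (J i) (Tm.eq σ))
          = (Ustruc U Mf).eqv σ :=
        qk_eq U Mf (Filter.univ_mem' fun i => evalF_eq (Eval.eq (J i) σ))
      rw [hv]
      exact Eval.eq _ σ
  | app s t ihs iht =>
      intro J
      have hv : qk U Mf _ (fun i => evalF (Mf i) (J i) (Tm.app s t))
          = uap U Mf (qk U Mf _ fun i => evalF (Mf i) (J i) s)
              (qk U Mf _ fun i => evalF (Mf i) (J i) t) := by
        rw [uap_qk]
        refine qk_eq U Mf (Filter.univ_mem' fun i => ?_)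
        exact evalF_eq (Eval.app (evalF_spec (Mf i) (J i) s) (evalF_spec (Mf i) (J i) t))
      rw [hv]
      exact Eval.app (ihs J) (iht J)
  | lam n σ s ih =>
      intro J
      refine Eval.lam n σ s _ fun a => ?_
      refine Quotient.inductionOn a fun x => ?_
      have hx : Quotient.mk (usetoid U Mf σ) x = qk U Mf σ x := rfl
      rw [hx]
      have hih := ih (fun i => updD (Mf i).toStruc (J i) n σ (x i))
      rw [← updD_qk U Mf J n σ x] at hih
      have hv : uap U Mf (qk U Mf _ fun i => evalF (Mf i) (J i) (Tm.lam n σ s)) (qk U Mf σ x)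
          = qk U Mf _ fun i => evalF (Mf i) (updD (Mf i).toStruc (J i) n σ (x i)) s := by
        rw [uap_qk]
        refine qk_eq U Mf (Filter.univ_mem' fun i => ?_)
        exact (evalF_eq (lam_inv (evalF_spec (Mf i) (J i) (Tm.lam n σ s)) (x i))).symm
      show Eval (Ustruc U Mf) _ _ s
        (uap U Mf (qk U Mf _ fun i => evalF (Mf i) (J i) (Tm.lam n σ s)) (qk U Mf σ x))
      rw [hv]
      exact hih

noncomputable def UInterp : Interp where
  toStruc := Ustruc U Mf
  total := fun σ s => ⟨qk U Mf σ fun i => evalF (Mf i) (Mf i).I s,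
    los U Mf s fun i => (Mf i).I⟩

theorem u_sat {A : Set (Tm Ty.o)}
    (hA : ∀ s ∈ A, {i | Eval (Mf i).toStruc (Mf i).I Ty.o s ((Mf i).bo.symm true)} ∈ U) :
    Satisfies (UInterp U Mf) A := by
  intro s hs
  have hl := los U Mf s fun i => (Mf i).I
  have hv : qk U Mf Ty.o (fun i => evalF (Mf i) (Mf i).I s)
      = (UInterp U Mf).bo.symm true := by
    refine qk_eq U Mf (Filter.mem_of_superset (hA s hs) fun i hi => ?_)
    exact evalF_eq hi
  rw [hv] at hl
  exact hl

end Ultra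

end Stmt17
namespace Stmt17

def Idx (A : Set (Tm Ty.o)) : Type := {B : Set (Tm Ty.o) // B ⊆ A ∧ B.Finite}

instance (A : Set (Tm Ty.o)) : Preorder (Idx A) := Preorder.lift (fun B => B.1)

instance (A : Set (Tm Ty.o)) : Nonempty (Idx A) := ⟨⟨∅, Set.empty_subset A, Set.finite_empty⟩⟩

instance (A : Set (Tm Ty.o)) : IsDirected (Idx A) (· ≤ ·) :=
  ⟨fun B C => ⟨⟨B.1 ∪ C.1, Set.union_subset B.2.1 C.2.1, B.2.2.union C.2.2⟩,
    Set.subset_union_left, Set.subset_union_right⟩⟩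

theorem main (A : Set (Tm Ty.o))
    (h : ∀ B ⊆ A, B.Finite → ∃ M : Interp, Satisfies M B) :
    ∃ M : Interp, Satisfies M A ∧ ∀ σ : Ty, Countable (M.D σ) := by
  classical
  have hU : (Filter.atTop : Filter (Idx A)).NeBot := Filter.atTop_neBot
  set U : Ultrafilter (Idx A) := Ultrafilter.of Filter.atTop with hUdef
  set Mf : Idx A → Interp := fun B => (h B.1 B.2.1 B.2.2).choose with hMf
  have hsat : ∀ B : Idx A, Satisfies (Mf B) B.1 := fun B => (h B.1 B.2.1 B.2.2).choose_spec
  have hA : ∀ s ∈ A, {i : Idx A | Eval (Mf i).toStruc (Mf i).I Ty.o s ((Mf i).bo.symm true)} ∈ U := by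
    intro s hs
    have h1 : Set.Ici (⟨{s}, Set.singleton_subset_iff.2 hs, Set.finite_singleton s⟩ : Idx A)
        ∈ (Filter.atTop : Filter (Idx A)) := Filter.Ici_mem_atTop _
    refine Filter.mem_of_superset (Ultrafilter.of_le Filter.atTop h1) fun B hB => ?_
    have hsB : s ∈ B.1 := hB (Set.mem_singleton_iff.2 rfl)
    exact hsat B s hsB
  refine ⟨SubI (UInterp U Mf), sub_sat (u_sat U Mf hA), fun σ => sub_countable _ σ⟩

end Stmt17

/-- Compactness with countable models: if every finite subset of a branch `A`
is satisfiable, then `A` has a model all of whose domains are countable. -/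
theorem stmt17 (Ω : NormOp)
    (hN4 : ∀ (M : Struc) (I : ℕ → ∀ σ, M.D σ), (∀ (σ : Ty) (s : Tm σ), ∃ a, Eval M I σ s a) →
      ∀ (σ : Ty) (s : Tm σ) (a : M.D σ), Eval M I σ s a ↔ Eval M I σ (Ω.nf s) a)
    (A : Set (Tm Ty.o)) (hnorm : ∀ s ∈ A, Ω.nf s = s)
    (h : ∀ B ⊆ A, B.Finite → ∃ M : Interp, Satisfies M B) :
    ∃ M : Interp, Satisfies M A ∧ ∀ σ : Ty, Countable (M.D σ) :=
  Stmt17.main A h
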